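/- For every integer n ≥ 1, the number of Motzkin paths of size n having no horizontal step at level 0 minus the number of Motzkin paths of size n having exactly one horizontal step at level 0 equals (−1)^n. -/

import Mathlib

/-- A Motzkin path: a sequence of up steps (+1), down steps (-1) and horizontal steps (0)
such that every prefix sum is nonnegative and the total sum is 0. -/
def IsMotzkinPath (l : List ℤ) : Prop :=
  (∀ x ∈ l, x = 1 ∨ x = -1 ∨ x = 0) ∧ (∀ k : ℕ, 0 ≤ (l.take k).sum) ∧ l.sum = 0

/-- The number of horizontal steps at level 0: steps equal to 0 such that the sum of the
preceding steps is 0. -/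
noncomputable def hZeroSteps (l : List ℤ) : ℕ :=
  {i : ℕ | i < l.length ∧ l.getD i 1 = 0 ∧ (l.take i).sum = 0}.ncard

/-- The number of Motzkin paths of size `n` with exactly `r0` horizontal steps at level 0. -/
noncomputable def motzkinCount (r0 n : ℕ) : ℕ :=
  {l : List ℤ | l.length = n ∧ IsMotzkinPath l ∧ hZeroSteps l = r0}.ncard

/-- The number of Motzkin paths of size `n`. -/
noncomputable def motzkinNum (n : ℕ) : ℕ :=
  {l : List ℤ | l.length = n ∧ IsMotzkinPath l}.ncard

namespace Motzkin10

/-! ### Nonnegative prefix sums from a starting level -/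

/-- nonnegative prefix sums starting from level `c` -/
def NN (c : ℤ) (l : List ℤ) : Prop := ∀ k : ℕ, 0 ≤ c + (l.take k).sum

lemma NN_nil {c : ℤ} : NN c ([] : List ℤ) ↔ 0 ≤ c := by
  constructor
  · intro h; simpa using h 0
  · intro h k; simpa using h

lemma NN_cons {c x : ℤ} {t : List ℤ} : NN c (x :: t) ↔ 0 ≤ c ∧ NN (c + x) t := by
  constructor
  · intro h
    refine ⟨by simpa using h 0, fun k => ?_⟩
    have := h (k + 1)
    simpa [List.take_succ_cons, add_assoc] using this
  · rintro ⟨h0, h⟩ k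
    cases k with
    | zero => simpa using h0
    | succ k =>
      have := h k
      simpa [List.take_succ_cons, add_assoc] using this

lemma NN_append {A B : List ℤ} : ∀ {c : ℤ}, NN c (A ++ B) ↔ NN c A ∧ NN (c + A.sum) B := by
  induction A with
  | nil =>
    intro c
    constructor
    · intro h; exact ⟨NN_nil.2 (by simpa using h 0), by simpa using h⟩
    · rintro ⟨-, h⟩; simpa using h
  | cons x t ih =>
    intro c
    simp only [List.cons_append, NN_cons, ih, List.sum_cons, and_assoc, add_assoc]

lemma NN_mono {c c' : ℤ} {l : List ℤ} (h : c ≤ c') (hl : NN c l) : NN c' l := by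
  intro k; have := hl k; omega

instance NN.dec : ∀ (c : ℤ) (l : List ℤ), Decidable (NN c l)
  | _, [] => decidable_of_iff _ NN_nil.symm
  | c, x :: t =>
    have : Decidable (NN (c + x) t) := NN.dec (c + x) t
    decidable_of_iff _ NN_cons.symm

/-! ### Counting horizontal steps at level 0 -/

/-- number of horizontal steps at level 0, starting from running level `c` -/
def hz : ℤ → List ℤ → ℕ
  | _, [] => 0
  | c, x :: t => (if x = 0 ∧ c = 0 then 1 else 0) + hz (c + x) t

lemma hz_append : ∀ (A : List ℤ) {c : ℤ} (B : List ℤ),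
    hz c (A ++ B) = hz c A + hz (c + A.sum) B
  | [], c, B => by simp [hz]
  | x :: t, c, B => by
    simp [hz, hz_append t B, add_assoc]

lemma hz_pos : ∀ (l : List ℤ) (c : ℤ), (∀ k : ℕ, 0 < c + (l.take k).sum) → hz c l = 0
  | [], _, _ => rfl
  | x :: t, c, h => by
    have h0 : 0 < c := by simpa using h 0
    have ht : hz (c + x) t = 0 := by
      refine hz_pos t (c + x) fun k => ?_
      have := h (k + 1)
      simpa [List.take_succ_cons, add_assoc] using this
    have hcon : ¬ (x = 0 ∧ c = 0) := by rintro ⟨hx, hc⟩; omega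
    simp [hz, ht, hcon]

lemma hz_eq_ncard : ∀ (l : List ℤ) (c : ℤ),
    {i : ℕ | i < l.length ∧ l.getD i 1 = 0 ∧ c + (l.take i).sum = 0}.ncard = hz c l := by
  intro l
  induction l with
  | nil => intro c; simp [hz]
  | cons x t ih =>
    intro c
    have hset : {i : ℕ | i < (x :: t).length ∧ (x :: t).getD i 1 = 0 ∧ c + ((x :: t).take i).sum = 0}
        = ↑((Finset.range (x :: t).length).filter
            (fun i => (x :: t).getD i 1 = 0 ∧ c + ((x :: t).take i).sum = 0)) := by
      ext i; simp [and_assoc]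
    rw [hset, Set.ncard_coe_finset, Finset.card_filter]
    rw [List.length_cons, Finset.sum_range_succ']
    have hterm : ∀ i, (if (x :: t).getD (i+1) 1 = 0 ∧ c + ((x :: t).take (i+1)).sum = 0 then 1 else 0)
        = (if t.getD i 1 = 0 ∧ (c + x) + (t.take i).sum = 0 then 1 else 0) := by
      intro i
      congr 1
      simp [List.take_succ_cons, add_assoc]
    simp only [hterm]
    have ht := ih (c + x)
    have hset2 : {i : ℕ | i < t.length ∧ t.getD i 1 = 0 ∧ (c + x) + (t.take i).sum = 0}
        = ↑((Finset.range t.length).filter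
            (fun i => t.getD i 1 = 0 ∧ (c + x) + (t.take i).sum = 0)) := by
      ext i; simp [and_assoc]
    rw [hset2, Set.ncard_coe_finset, Finset.card_filter] at ht
    rw [ht, hz]
    have h0 : (if (x :: t).getD 0 1 = 0 ∧ c + ((x :: t).take 0).sum = 0 then 1 else 0)
        = (if x = 0 ∧ c = 0 then 1 else 0) := by
      congr 1
      simp
    rw [h0]
    ring

lemma hZeroSteps_eq_hz (l : List ℤ) : hZeroSteps l = hz 0 l := by
  rw [hZeroSteps, ← hz_eq_ncard l 0]
  congr 1
  ext i
  simp

lemma hz_cons_zero (B : List ℤ) : hz 0 ((0 : ℤ) :: B) = hz 0 B + 1 := by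
  simp [hz, add_comm]

lemma hz_arch {A : List ℤ} (B : List ℤ) (hA : NN 0 A) (hsA : A.sum = 0) :
    hz 0 ((1 : ℤ) :: (A ++ (-1 : ℤ) :: B)) = hz 0 B := by
  have h1 : hz 1 (A ++ (-1 : ℤ) :: B) = hz 1 A + hz (1 + A.sum) ((-1 : ℤ) :: B) :=
    hz_append A _
  have h2 : hz 1 A = 0 := by
    refine hz_pos A 1 fun k => ?_
    have := hA k
    omega
  have h3 : hz (1 + A.sum) ((-1 : ℤ) :: B) = hz 0 B := by
    rw [hsA]
    simp [hz]
  simp [hz, h1, h2, h3, hsA]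

/-! ### The finite set of Motzkin paths -/

def L : ℕ → Finset (List ℤ)
  | 0 => {[]}
  | n + 1 => ({1, -1, 0} : Finset ℤ).biUnion fun s => (L n).image (s :: ·)

lemma mem_L : ∀ {n : ℕ} {l : List ℤ},
    l ∈ L n ↔ l.length = n ∧ ∀ x ∈ l, x = 1 ∨ x = -1 ∨ x = 0 := by
  intro n
  induction n with
  | zero => intro l; simp [L, List.length_eq_zero_iff]; rintro rfl; simp
  | succ n ih =>
    intro l
    cases l with
    | nil => simp [L]
    | cons x t =>
      simp only [L, Finset.mem_biUnion, Finset.mem_image, Finset.mem_insert, Finset.mem_singleton]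
      constructor
      · rintro ⟨s, hs, t', ht', heq⟩
        injection heq with h1 h2
        subst h1; subst h2
        obtain ⟨hlen, hmem⟩ := ih.1 ht'
        refine ⟨by simp [hlen], ?_⟩
        intro y hy
        rcases List.mem_cons.1 hy with rfl | hy
        · tauto
        · exact hmem y hy
      · rintro ⟨hlen, hmem⟩
        refine ⟨x, ?_, t, ih.2 ⟨by simpa using hlen, fun y hy => hmem y (List.mem_cons_of_mem _ hy)⟩, rfl⟩
        exact hmem x List.mem_cons_self

def paths (n : ℕ) : Finset (List ℤ) :=
  (L n).filter fun l => (∀ x ∈ l, x = 1 ∨ x = -1 ∨ x = 0) ∧ NN 0 l ∧ l.sum = 0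

lemma mem_paths {n : ℕ} {l : List ℤ} :
    l ∈ paths n ↔ l.length = n ∧ (∀ x ∈ l, x = 1 ∨ x = -1 ∨ x = 0) ∧ NN 0 l ∧ l.sum = 0 := by
  simp only [paths, Finset.mem_filter, mem_L]
  tauto

lemma mem_paths_iff {n : ℕ} {l : List ℤ} :
    l ∈ paths n ↔ l.length = n ∧ IsMotzkinPath l := by
  rw [mem_paths, IsMotzkinPath]
  constructor
  · rintro ⟨h1, h2, h3, h4⟩
    exact ⟨h1, h2, fun k => by simpa using h3 k, h4⟩
  · rintro ⟨h1, h2, h3, h4⟩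
    exact ⟨h1, h2, fun k => by simpa using h3 k, h4⟩

/-! ### First return decomposition -/

lemma split_exists : ∀ (t : List ℤ) (c : ℤ), (∀ x ∈ t, x = 1 ∨ x = -1 ∨ x = 0) →
    1 ≤ c → NN c t → c + t.sum = 0 →
    ∃ A B : List ℤ, t = A ++ -1 :: B ∧ (∀ k : ℕ, 1 ≤ c + (A.take k).sum) ∧ c + A.sum = 1 ∧
      NN 0 B ∧ B.sum = 0 := by
  intro t
  induction t with
  | nil => intro c _ hc _ hsum; simp at hsum; omega
  | cons x t ih =>
    intro c hmem hc hNN hsum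
    have hx : x = 1 ∨ x = -1 ∨ x = 0 := hmem x List.mem_cons_self
    have hNN' : NN (c + x) t := (NN_cons.1 hNN).2
    by_cases hcx : c + x = 0
    · have hx1 : x = -1 := by rcases hx with rfl | rfl | rfl <;> omega
      have hc1 : c = 1 := by omega
      refine ⟨[], t, by simp [hx1], ?_, by simp [hc1], ?_, ?_⟩
      · intro k; simp [hc1]
      · simpa [hcx] using hNN'
      · have : c + (x + t.sum) = 0 := by simpa using hsum
        omega
    · have hge : 1 ≤ c + x := by
        have := hNN 1
        simp [List.take_succ_cons] at this
        omega
      obtain ⟨A, B, hAB, hA1, hA2, hB1, hB2⟩ :=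
        ih (c + x) (fun y hy => hmem y (List.mem_cons_of_mem _ hy)) hge hNN'
          (by simp only [List.sum_cons] at hsum; omega)
      refine ⟨x :: A, B, by simp [hAB], ?_, by simpa [add_assoc] using hA2, hB1, hB2⟩
      intro k
      cases k with
      | zero => simpa using hc
      | succ k => have := hA1 k; simp [List.take_succ_cons]; omega

lemma split_unique {A B A' B' : List ℤ} (h : A ++ -1 :: B = A' ++ -1 :: B')
    (hA : NN 0 A) (hA' : NN 0 A') (hsA : A.sum = 0) (hsA' : A'.sum = 0) :
    A = A' ∧ B = B' := by
  have key : ∀ (X Y : List ℤ) (U V : List ℤ), X ++ -1 :: U = Y ++ -1 :: V →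
      NN 0 Y → X.sum = 0 → X.length < Y.length → False := by
    intro X Y U V heq hY hsX hlt
    have htake : Y.take (X.length + 1) = X ++ [-1] := by
      have h1 : (X ++ -1 :: U).take (X.length + 1) = X ++ [-1] := by
        rw [List.take_append]
        simp
      have h2 : (Y ++ -1 :: V).take (X.length + 1) = Y.take (X.length + 1) := by
        rw [List.take_append,
          show X.length + 1 - Y.length = 0 from by omega]
        simp
      rw [← h2, ← heq, h1]
    have := hY (X.length + 1)
    rw [htake] at this
    simp [hsX] at this
  rcases lt_trichotomy A.length A'.length with hlt | heq' | hlt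
  · exact (key A A' B B' h hA' hsA hlt).elim
  · obtain ⟨h1, h2⟩ := List.append_inj h heq'
    injection h2 with _ h3
    exact ⟨h1, h3⟩
  · exact (key A' A B' B h.symm hA hsA' hlt).elim

/-- The arch map. -/
def arch (q : List ℤ × List ℤ) : List ℤ := (1 : ℤ) :: (q.1 ++ (-1 : ℤ) :: q.2)

lemma arch_mem {i j : ℕ} {A B : List ℤ} (hA : A ∈ paths i) (hB : B ∈ paths j) :
    arch (A, B) ∈ paths (i + j + 2) := by
  rw [mem_paths] at hA hB ⊢
  obtain ⟨hAl, hAm, hAn, hAs⟩ := hA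
  obtain ⟨hBl, hBm, hBn, hBs⟩ := hB
  refine ⟨?_, ?_, ?_, ?_⟩
  · simp [arch, hAl, hBl]; omega
  · intro x hx
    simp only [arch, List.mem_cons, List.mem_append] at hx
    rcases hx with rfl | hx | rfl | hx
    · tauto
    · exact hAm x hx
    · tauto
    · exact hBm x hx
  · rw [arch, NN_cons]
    refine ⟨le_refl 0, ?_⟩
    rw [NN_append]
    refine ⟨NN_mono (by norm_num) hAn, ?_⟩
    rw [hAs, NN_cons]
    norm_num
    simpa using hBn
  · simp [arch, hAs, hBs]

lemma zero_cons_mem {n : ℕ} {B : List ℤ} (hB : B ∈ paths n) : (0 : ℤ) :: B ∈ paths (n + 1) := by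
  rw [mem_paths] at hB ⊢
  obtain ⟨hBl, hBm, hBn, hBs⟩ := hB
  refine ⟨by simp [hBl], ?_, ?_, by simp [hBs]⟩
  · intro x hx
    rcases List.mem_cons.1 hx with rfl | hx
    · tauto
    · exact hBm x hx
  · rw [NN_cons]
    exact ⟨le_refl 0, by simpa using hBn⟩

/-- Master decomposition of Motzkin paths by their first step / first return. -/
lemma master_eq (n : ℕ) : paths (n + 1) =
    ((paths n).image fun B => (0 : ℤ) :: B) ∪
      (Finset.range n).biUnion fun i =>
        ((paths i ×ˢ paths (n - 1 - i)).image arch) := by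
  ext l
  constructor
  · intro hl
    rw [mem_paths] at hl
    obtain ⟨hlen, hmem, hNN, hsum⟩ := hl
    cases l with
    | nil => simp at hlen
    | cons x t =>
      have hx : x = 1 ∨ x = -1 ∨ x = 0 := hmem x List.mem_cons_self
      have hx0 : 0 ≤ x := by
        have := hNN 1
        simp [List.take_succ_cons] at this
        omega
      have hNN' : NN (0 + x) t := (NN_cons.1 hNN).2
      have hlt : t.length = n := by simpa using hlen
      rcases hx with rfl | rfl | rfl
      · -- up step : first return decomposition
        obtain ⟨A, B, hAB, hA1, hA2, hB1, hB2⟩ :=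
          split_exists t 1 (fun y hy => hmem y (List.mem_cons_of_mem _ hy)) le_rfl
            (by simpa using hNN')
            (by simp only [List.sum_cons] at hsum; omega)
        apply Finset.mem_union_right
        rw [Finset.mem_biUnion]
        have hlenAB : A.length + 1 + B.length = n := by
          rw [hAB] at hlt; simp at hlt; omega
        refine ⟨A.length, Finset.mem_range.2 (by omega), ?_⟩
        rw [Finset.mem_image]
        refine ⟨(A, B), ?_, by simp [arch, hAB]⟩
        rw [Finset.mem_product]
        constructor
        · show A ∈ paths A.length
          rw [mem_paths]
          refine ⟨rfl, ?_, ?_, by omega⟩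
          · intro y hy
            exact hmem y (List.mem_cons_of_mem _ (hAB ▸ List.mem_append_left _ hy))
          · intro k; have := hA1 k; omega
        · show B ∈ paths (n - 1 - A.length)
          rw [mem_paths]
          refine ⟨by omega, ?_, hB1, hB2⟩
          intro y hy
          exact hmem y (List.mem_cons_of_mem _ (hAB ▸ List.mem_append_right _ (List.mem_cons_of_mem _ hy)))
      · exfalso; omega
      · -- horizontal step at level 0
        apply Finset.mem_union_left
        rw [Finset.mem_image]
        refine ⟨t, ?_, rfl⟩
        rw [mem_paths]
        refine ⟨hlt, fun y hy => hmem y (List.mem_cons_of_mem _ hy), by simpa using hNN', ?_⟩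
        simp at hsum
        exact hsum
  · intro hl
    rcases Finset.mem_union.1 hl with hl | hl
    · rw [Finset.mem_image] at hl
      obtain ⟨B, hB, rfl⟩ := hl
      exact zero_cons_mem hB
    · rw [Finset.mem_biUnion] at hl
      obtain ⟨i, hi, hl⟩ := hl
      rw [Finset.mem_image] at hl
      obtain ⟨⟨A, B⟩, hq, rfl⟩ := hl
      rw [Finset.mem_product] at hq
      have := arch_mem hq.1 hq.2
      have hin : i + (n - 1 - i) + 2 = n + 1 := by
        rw [Finset.mem_range] at hi; omega
      rwa [hin] at this

/-! ### Cardinality consequences -/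

lemma prod_filter_card (p : ℕ → Prop) [DecidablePred p] (i j : ℕ) :
    ((paths i ×ˢ paths j).filter fun q => p (hz 0 q.2)).card
      = (paths i).card * ((paths j).filter fun l => p (hz 0 l)).card := by
  rw [show ((paths i ×ˢ paths j).filter fun q => p (hz 0 q.2))
      = paths i ×ˢ ((paths j).filter fun l => p (hz 0 l)) from ?_, Finset.card_product]
  ext ⟨A, B⟩
  simp only [Finset.mem_filter, Finset.mem_product]
  tauto

lemma master_card (p : ℕ → Prop) [DecidablePred p] (n : ℕ) :
    ((paths (n + 1)).filter fun l => p (hz 0 l)).card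
      = ((paths n).filter fun l => p (hz 0 l + 1)).card
        + ∑ i ∈ Finset.range n,
            (paths i).card * ((paths (n - 1 - i)).filter fun l => p (hz 0 l)).card := by
  classical
  rw [master_eq, Finset.filter_union]
  rw [Finset.card_union_of_disjoint]
  · congr 1
    · -- horizontal part
      have h1 : (((paths n).image fun B => (0 : ℤ) :: B).filter fun l => p (hz 0 l))
          = ((paths n).filter fun B => p (hz 0 B + 1)).image fun B => (0 : ℤ) :: B := by
        rw [Finset.filter_image]
        congr 1
        apply Finset.filter_congr
        intro B _
        rw [hz_cons_zero]
      rw [h1, Finset.card_image_of_injective]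
      intro a b hab
      injection hab
    · -- arch part
      rw [Finset.filter_biUnion, Finset.card_biUnion]
      · apply Finset.sum_congr rfl
        intro i hi
        have h2 : (((paths i ×ˢ paths (n - 1 - i)).image arch).filter fun l => p (hz 0 l))
            = ((paths i ×ˢ paths (n - 1 - i)).filter fun q => p (hz 0 q.2)).image arch := by
          rw [Finset.filter_image]
          congr 1
          apply Finset.filter_congr
          rintro ⟨A, B⟩ hq
          rw [Finset.mem_product, mem_paths, mem_paths] at hq
          rw [show arch (A, B) = (1 : ℤ) :: (A ++ (-1 : ℤ) :: B) from rfl,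
            hz_arch B hq.1.2.2.1 hq.1.2.2.2]
        rw [h2, Finset.card_image_of_injOn, prod_filter_card]
        rintro ⟨A, B⟩ hq ⟨A', B'⟩ hq' heq
        simp only [Finset.mem_coe, Finset.mem_filter, Finset.mem_product, mem_paths] at hq hq'
        simp only [arch] at heq
        injection heq with _ heq2
        obtain ⟨hAA, hBB⟩ := split_unique heq2 hq.1.1.2.2.1 hq'.1.1.2.2.1 hq.1.1.2.2.2 hq'.1.1.2.2.2
        simp [hAA, hBB]
      · -- pairwise disjoint
        intro i _ j _ hij
        rw [Function.onFun, Finset.disjoint_left]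
        intro l hl hl'
        rw [Finset.mem_filter, Finset.mem_image] at hl hl'
        obtain ⟨⟨⟨A, B⟩, hq, hlq⟩, -⟩ := hl
        obtain ⟨⟨⟨A', B'⟩, hq', hlq'⟩, -⟩ := hl'
        rw [Finset.mem_product, mem_paths, mem_paths] at hq hq'
        rw [← hlq'] at hlq
        simp only [arch] at hlq
        injection hlq with _ heq2
        obtain ⟨hAA, -⟩ := split_unique heq2 hq.1.2.2.1 hq'.1.2.2.1 hq.1.2.2.2 hq'.1.2.2.2
        apply hij
        rw [← hq.1.1, ← hq'.1.1, hAA]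
  · -- disjointness of the two parts
    rw [Finset.disjoint_left]
    intro l hl hl'
    rw [Finset.mem_filter, Finset.mem_image] at hl
    rw [Finset.mem_filter, Finset.mem_biUnion] at hl'
    obtain ⟨⟨B, -, hlB⟩, -⟩ := hl
    obtain ⟨⟨i, -, hl2⟩, -⟩ := hl'
    rw [Finset.mem_image] at hl2
    obtain ⟨q, -, hlq⟩ := hl2
    rw [← hlB] at hlq
    simp [arch] at hlq

/-! ### The three counting sequences -/

noncomputable def aa (n : ℕ) : ℤ := ((paths n).filter fun l => hz 0 l = 0).card
noncomputable def bb (n : ℕ) : ℤ := ((paths n).filter fun l => hz 0 l = 1).card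
noncomputable def mm (n : ℕ) : ℤ := (paths n).card

lemma paths_zero : paths 0 = {[]} := by
  ext l
  rw [mem_paths]
  simp [List.length_eq_zero_iff, NN_nil]
  rintro rfl
  simp [NN_nil]

lemma aa_zero : aa 0 = 1 := by
  simp [aa, paths_zero, Finset.filter_singleton, hz]
lemma bb_zero : bb 0 = 0 := by
  simp [bb, paths_zero, Finset.filter_singleton, hz]
lemma mm_zero : mm 0 = 1 := by simp [mm, paths_zero]

lemma rec_a (n : ℕ) : aa (n + 1) = ∑ i ∈ Finset.range n, mm i * aa (n - 1 - i) := by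
  have h := master_card (· = 0) n
  have h0 : ((paths n).filter fun l => hz 0 l + 1 = 0).card = 0 := by
    simp
  rw [h0, zero_add] at h
  rw [aa, h]
  push_cast
  rfl

lemma rec_b (n : ℕ) : bb (n + 1) = aa n + ∑ i ∈ Finset.range n, mm i * bb (n - 1 - i) := by
  have h := master_card (· = 1) n
  have h0 : ((paths n).filter fun l => hz 0 l + 1 = 1) = (paths n).filter fun l => hz 0 l = 0 := by
    apply Finset.filter_congr
    intro l _
    omega
  rw [h0] at h
  rw [bb, h]
  push_cast
  rfl

lemma rec_m (n : ℕ) : mm (n + 1) = mm n + ∑ i ∈ Finset.range n, mm i * mm (n - 1 - i) := by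
  have h := master_card (fun _ => True) n
  simp only [Finset.filter_true] at h
  rw [mm, h]
  push_cast
  rfl

/-! ### The algebraic identities -/

lemma identity_one : ∀ n : ℕ, aa (n + 1) + aa n = mm n := by
  intro n
  induction n using Nat.strong_induction_on with
  | _ n ih =>
    match n with
    | 0 => rw [rec_a 0, aa_zero, mm_zero]; simp
    | Nat.succ k =>
      have hsum : aa (k + 2) = ∑ i ∈ Finset.range (k + 1), mm i * aa (k - i) := by
        rw [rec_a (k + 1)]
        apply Finset.sum_congr rfl
        intro i hi
        congr 2
      rw [hsum, Finset.sum_range_succ]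
      have hk : k - k = 0 := by omega
      rw [hk, aa_zero, mul_one]
      have hstep : ∀ i ∈ Finset.range k, mm i * aa (k - i)
          = mm i * mm (k - 1 - i) - mm i * aa (k - 1 - i) := by
        intro i hi
        rw [Finset.mem_range] at hi
        have h1 : k - i = (k - 1 - i) + 1 := by omega
        have h2 := ih (k - 1 - i) (by omega)
        rw [h1]
        have : aa (k - 1 - i + 1) = mm (k - 1 - i) - aa (k - 1 - i) := by linarith
        rw [this]
        ring
      rw [Finset.sum_congr rfl hstep, Finset.sum_sub_distrib]
      rw [← rec_a k]
      have hm : ∑ i ∈ Finset.range k, mm i * mm (k - 1 - i) = mm (k + 1) - mm k := by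
        rw [rec_m k]; ring
      rw [hm]
      show mm (k + 1) - mm k - aa (k + 1) + mm k + aa (k + 1) = mm (k + 1)
      ring

lemma identity_three : ∀ k : ℕ, ∑ i ∈ Finset.range k, mm i * (-1 : ℤ) ^ (k - 1 - i)
    = aa k + (-1 : ℤ) ^ (k + 1) := by
  intro k
  induction k with
  | zero => simp [aa_zero]
  | succ k ih =>
    rw [Finset.sum_range_succ]
    have hk : k + 1 - 1 - k = 0 := by omega
    have hterm : ∀ i ∈ Finset.range k, mm i * (-1 : ℤ) ^ (k + 1 - 1 - i)
        = -(mm i * (-1 : ℤ) ^ (k - 1 - i)) := by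
      intro i hi
      rw [Finset.mem_range] at hi
      rw [show k + 1 - 1 - i = (k - 1 - i) + 1 from by omega, pow_succ]
      ring
    rw [Finset.sum_congr rfl hterm, Finset.sum_neg_distrib, ih, hk, pow_zero, mul_one]
    have h1 := identity_one k
    have hp : (-1 : ℤ) ^ (k + 1 + 1) = -(-1 : ℤ) ^ (k + 1) := by
      rw [pow_succ]; ring
    rw [hp]
    linarith

lemma identity_d : ∀ n : ℕ, aa n - bb n = (-1 : ℤ) ^ n := by
  intro n
  induction n using Nat.strong_induction_on with
  | _ n ih =>
    match n with
    | 0 => rw [aa_zero, bb_zero]; simp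
    | Nat.succ k =>
      have hstep : ∀ i ∈ Finset.range k, mm i * aa (k - 1 - i) - mm i * bb (k - 1 - i)
          = mm i * (-1 : ℤ) ^ (k - 1 - i) := by
        intro i hi
        rw [← mul_sub, ih (k - 1 - i) (by rw [Finset.mem_range] at hi; omega)]
      have : aa (k + 1) - bb (k + 1)
          = (∑ i ∈ Finset.range k, mm i * (-1 : ℤ) ^ (k - 1 - i)) - aa k := by
        rw [rec_a k, rec_b k, ← Finset.sum_congr rfl hstep, Finset.sum_sub_distrib]
        ring
      rw [this, identity_three k, pow_succ]
      ring

end Motzkin10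

theorem stmt10 (n : ℕ) (hn : 1 ≤ n) :
    (motzkinCount 0 n : ℤ) - (motzkinCount 1 n : ℤ) = (-1) ^ n := by
  have ha : (motzkinCount 0 n : ℤ) = Motzkin10.aa n := by
    rw [motzkinCount, Motzkin10.aa]
    congr 1
    rw [show {l : List ℤ | l.length = n ∧ IsMotzkinPath l ∧ hZeroSteps l = 0}
        = ↑((Motzkin10.paths n).filter fun l => Motzkin10.hz 0 l = 0) from ?_,
      Set.ncard_coe_finset]
    ext l
    simp only [Set.mem_setOf_eq, Finset.coe_filter, Motzkin10.mem_paths_iff,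
      Motzkin10.hZeroSteps_eq_hz]
    tauto
  have hb : (motzkinCount 1 n : ℤ) = Motzkin10.bb n := by
    rw [motzkinCount, Motzkin10.bb]
    congr 1
    rw [show {l : List ℤ | l.length = n ∧ IsMotzkinPath l ∧ hZeroSteps l = 1}
        = ↑((Motzkin10.paths n).filter fun l => Motzkin10.hz 0 l = 1) from ?_,
      Set.ncard_coe_finset]
    ext l
    simp only [Set.mem_setOf_eq, Finset.coe_filter, Motzkin10.mem_paths_iff,
      Motzkin10.hZeroSteps_eq_hz]
    tauto
  rw [ha, hb, Motzkin10.identity_d n]
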